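/- Fix n : ℕ with n ≥ 1 and let ω = exp(πi/4) ∈ ℂ. Let H_n be the subgroup of invertible linear operators on ℂ^{(Fin n → ZMod 2)} generated by: T_i (i : Fin n) with T_i e_x = ω^{(x i).val} • e_x, and CNOT_{i,j} (i ≠ j) with CNOT_{i,j} e_x = e_{Function.update x j (x i + x j)}. Then H_n is finite and its cardinality is 2^{3n + 2·(n choose 2) + (n choose 3)} · ∏_{i=1}^{n} (2^n − 2^{i−1}). -/

import Mathlib

open scoped BigOperators

noncomputable section

/-- The `n`-qubit state space `ℂ^(Fin n → ZMod 2)`. -/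
abbrev QState (n : ℕ) := (Fin n → ZMod 2) → ℂ

/-- The standard basis vector `e x`. -/
def e {n : ℕ} (x : Fin n → ZMod 2) : QState n := Pi.single x 1

/-- `ω = exp (π i / 4)`. -/
def ω : ℂ := Complex.exp (Real.pi * Complex.I / 4)

/-- The generators of the group of `n`-qubit CNOT+T operators: the `T` gates and the
`CNOT` gates, each specified by its action on the standard basis vectors. -/
def cnotTGens (n : ℕ) : Set (LinearMap.GeneralLinearGroup ℂ (QState n)) :=
  {W | ∃ i : Fin n, ∀ x, W.val (e x) = ω ^ (x i).val • e x} ∪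
  {W | ∃ i j : Fin n, i ≠ j ∧ ∀ x, W.val (e x) = e (Function.update x j (x i + x j))}

/-- The group `H_n` of `n`-qubit CNOT+T operators. -/
def cnotTGroup (n : ℕ) : Subgroup (LinearMap.GeneralLinearGroup ℂ (QState n)) :=
  Subgroup.closure (cnotTGens n)

namespace Stmt12

abbrev V (n : ℕ) := Fin n → ZMod 2

variable {n : ℕ}

lemma omega_pow (k : ℕ) : ω ^ k = Complex.exp (k * (Real.pi * Complex.I / 4)) := by
  rw [ω, ← Complex.exp_nat_mul]

lemma omega_pow_eight : ω ^ 8 = 1 := by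
  rw [omega_pow]
  push_cast
  rw [show (8 : ℂ) * (Real.pi * Complex.I / 4) = 2 * Real.pi * Complex.I by ring]
  exact Complex.exp_two_pi_mul_I

def ωz (k : ZMod 8) : ℂ := ω ^ k.val

lemma ωz_natCast (m : ℕ) : ωz (m : ZMod 8) = ω ^ m := by
  rw [ωz, ZMod.val_natCast]
  conv_rhs => rw [← Nat.div_add_mod m 8]
  rw [pow_add, pow_mul, omega_pow_eight, one_pow, one_mul]

lemma ωz_zero : ωz 0 = 1 := by
  simpa using ωz_natCast 0

lemma ωz_add (a b : ZMod 8) : ωz (a + b) = ωz a * ωz b := by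
  have h : ((a.val + b.val : ℕ) : ZMod 8) = a + b := by
    push_cast
    rw [ZMod.natCast_val, ZMod.natCast_val, ZMod.cast_id, ZMod.cast_id]
  rw [← h, ωz_natCast, pow_add, ωz, ωz]

lemma ω_ne_zero : ω ≠ 0 := Complex.exp_ne_zero _

lemma ωz_ne_zero (a : ZMod 8) : ωz a ≠ 0 := pow_ne_zero _ ω_ne_zero

lemma ωz_inj : Function.Injective ωz := by
  intro a b hab
  rw [ωz, ωz, omega_pow, omega_pow, Complex.exp_eq_exp_iff_exists_int] at hab
  obtain ⟨m, hm⟩ := hab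
  have hπ : (Real.pi : ℂ) * Complex.I / 4 ≠ 0 := by
    apply div_ne_zero _ (by norm_num)
    exact mul_ne_zero (by exact_mod_cast Real.pi_ne_zero) Complex.I_ne_zero
  have : (a.val : ℂ) = (b.val : ℂ) + 8 * m := by
    have h2 : (a.val : ℂ) * (Real.pi * Complex.I / 4) =
        ((b.val : ℂ) + 8 * m) * (Real.pi * Complex.I / 4) := by
      rw [hm]; ring
    exact mul_right_cancel₀ hπ h2
  have hz : (a.val : ℤ) = (b.val : ℤ) + 8 * m := by exact_mod_cast this
  have : ((a.val : ℤ) : ZMod 8) = ((b.val : ℤ) : ZMod 8) := by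
    rw [hz]; push_cast; simp [show (8 : ZMod 8) = 0 by decide]
  simpa [ZMod.natCast_val, ZMod.cast_id] using this


/-- The unitary-like operator given by a permutation of basis states and a phase function. -/
def U (σ : V n ≃ V n) (f : V n → ZMod 8) : QState n ≃ₗ[ℂ] QState n where
  toFun ψ := fun y => ωz (f (σ.symm y)) * ψ (σ.symm y)
  invFun ψ := fun y => (ωz (f y))⁻¹ * ψ (σ y)
  map_add' ψ φ := by funext y; simp [mul_add]
  map_smul' c ψ := by funext y; simp [Pi.smul_apply, smul_eq_mul]; ring
  left_inv ψ := by
    funext y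
    simp [inv_mul_cancel_left₀ (ωz_ne_zero _)]
  right_inv ψ := by
    funext y
    simp [mul_inv_cancel_left₀ (ωz_ne_zero _)]

def Ugl (σ : V n ≃ V n) (f : V n → ZMod 8) : LinearMap.GeneralLinearGroup ℂ (QState n) where
  val := (U σ f).toLinearMap
  inv := (U σ f).symm.toLinearMap
  val_inv := by ext ψ; simp
  inv_val := by ext ψ; simp

lemma Ugl_apply_e (σ : V n ≃ V n) (f : V n → ZMod 8) (x : V n) :
    (Ugl σ f).val (e x) = ωz (f x) • e (σ x) := by
  funext y
  show ωz (f (σ.symm y)) * (e x) (σ.symm y) = ωz (f x) • (e (σ x)) y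
  by_cases h : y = σ x
  · subst h
    simp [e, Pi.single_apply]
  · have h1 : σ.symm y ≠ x := fun hc => h (by rw [← hc]; simp)
    simp only [e, Pi.single_apply, if_neg h1, mul_zero, smul_eq_mul]
    rw [if_neg h, mul_zero]

lemma glext {W W' : LinearMap.GeneralLinearGroup ℂ (QState n)}
    (h : ∀ x, W.val (e x) = W'.val (e x)) : W = W' := by
  apply Units.ext
  apply Module.Basis.ext (Pi.basisFun ℂ (V n))
  intro x
  simpa [e] using h x

lemma unit_inv_apply {W : LinearMap.GeneralLinearGroup ℂ (QState n)} {z w : QState n}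
    (h : W.val w = z) : (W⁻¹).val z = w := by
  rw [← h, ← Module.End.mul_apply]
  rw [show (W⁻¹).val * W.val = 1 from by rw [← Units.val_mul, inv_mul_cancel, Units.val_one]]
  rfl


/-- linear-form phase generator -/
def dotf (v : V n) : V n → ZMod 8 := fun x => (((∑ j, v j * x j).val : ℕ) : ZMod 8)

/-- The group of achievable phase functions. -/
def Pgrp (n : ℕ) : AddSubgroup (V n → ZMod 8) := AddSubgroup.closure (Set.range (dotf (n := n)))

lemma zmod2_cases (a : ZMod 2) : a = 0 ∨ a = 1 := by revert a; decide

lemma dotf_single (i : Fin n) : dotf (Pi.single i 1) = fun x => (((x i).val : ℕ) : ZMod 8) := by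
  funext x
  unfold dotf
  have h : (∑ j, (Pi.single i 1 : V n) j * x j) = x i := by
    simp [Pi.single_apply, ite_mul]
  rw [h]

def coordf (i : Fin n) : V n → ZMod 8 := fun x => (((x i).val : ℕ) : ZMod 8)

lemma coordf_mem (i : Fin n) : coordf i ∈ Pgrp n := by
  have : coordf i = dotf (Pi.single i 1) := (dotf_single i).symm
  rw [this]
  exact AddSubgroup.subset_closure ⟨_, rfl⟩

/-- every linear functional is a dot-product functional -/
lemma linfun_eq (g : V n →ₗ[ZMod 2] ZMod 2) (x : V n) :
    g x = ∑ j, g (Pi.single j 1) * x j := by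
  have hx : x = ∑ j, x j • Pi.single j (1 : ZMod 2) := by
    funext k
    rw [Finset.sum_apply]
    simp [Pi.single_apply, smul_eq_mul]
  conv_lhs => rw [hx]
  rw [map_sum]
  exact Finset.sum_congr rfl (fun j _ => by rw [map_smul]; simp [smul_eq_mul, mul_comm])

lemma Pgrp_comp (τ : V n →ₗ[ZMod 2] V n) {f : V n → ZMod 8} (hf : f ∈ Pgrp n) :
    (fun x => f (τ x)) ∈ Pgrp n := by
  induction hf using AddSubgroup.closure_induction with
  | mem g hg =>
    obtain ⟨v, rfl⟩ := hg
    set g : V n →ₗ[ZMod 2] ZMod 2 :=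
      { toFun := fun x => ∑ j, v j * (τ x) j
        map_add' := fun a b => by simp [map_add, Pi.add_apply, mul_add, Finset.sum_add_distrib]
        map_smul' := fun c a => by
          simp only [map_smul, Pi.smul_apply, smul_eq_mul, RingHom.id_apply, Finset.mul_sum]
          exact Finset.sum_congr rfl (fun j _ => by ring) } with hgdef
    have : (fun x => dotf v (τ x)) = dotf (fun j => g (Pi.single j 1)) := by
      funext x
      unfold dotf
      exact congrArg (fun z : ZMod 2 => ((z.val : ℕ) : ZMod 8))
        (by simpa [hgdef] using linfun_eq g x)
    rw [this]
    exact AddSubgroup.subset_closure ⟨_, rfl⟩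
  | zero => exact zero_mem (Pgrp n)
  | add a b _ _ ha hb => exact add_mem ha hb
  | neg a _ ha => exact neg_mem ha


/-- The concrete description of the CNOT+T group. -/
def G (n : ℕ) : Subgroup (LinearMap.GeneralLinearGroup ℂ (QState n)) where
  carrier := {W | ∃ σ : V n ≃ₗ[ZMod 2] V n, ∃ f ∈ Pgrp n,
    ∀ x, W.val (e x) = ωz (f x) • e (σ x)}
  one_mem' := by
    refine ⟨LinearEquiv.refl _ _, 0, zero_mem _, fun x => ?_⟩
    simp [ωz_zero]
  mul_mem' := by
    rintro W₁ W₂ ⟨σ, f, hf, h1⟩ ⟨τ, g, hg, h2⟩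
    refine ⟨τ.trans σ, (fun x => f (τ x)) + g,
      add_mem (Pgrp_comp τ.toLinearMap hf) hg, fun x => ?_⟩
    have : (W₁ * W₂).val (e x) = W₁.val (W₂.val (e x)) := rfl
    rw [this, h2, map_smul, h1, smul_smul, Pi.add_apply, ωz_add]
    rw [mul_comm (ωz (f (τ x)))]
    rfl
  inv_mem' := by
    rintro W ⟨σ, f, hf, h1⟩
    refine ⟨σ.symm, -(fun x => f (σ.symm x)),
      neg_mem (Pgrp_comp σ.symm.toLinearMap hf), fun y => ?_⟩
    apply unit_inv_apply
    rw [map_smul, h1, smul_smul, ← ωz_add]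
    rw [show ((-fun x => f (σ.symm x)) y) + f (σ.symm y) = 0 by simp, ωz_zero]
    simp


section cnot

def cnotFun (i j : Fin n) : V n → V n := fun x => Function.update x j (x i + x j)

lemma cnotFun_apply (i j : Fin n) (x : V n) (k : Fin n) :
    cnotFun i j x k = if k = j then x i + x j else x k := by
  simp [cnotFun, Function.update_apply]

lemma cnotFun_invol (i j : Fin n) (hij : i ≠ j) (x : V n) :
    cnotFun i j (cnotFun i j x) = x := by
  funext k
  by_cases hk : k = j
  · subst hk
    rw [cnotFun_apply, if_pos rfl, cnotFun_apply, if_neg hij, cnotFun_apply, if_pos rfl]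
    rw [← add_assoc, CharTwo.add_self_eq_zero, zero_add]
  · rw [cnotFun_apply, if_neg hk, cnotFun_apply, if_neg hk]

def cnotL (i j : Fin n) (hij : i ≠ j) : V n ≃ₗ[ZMod 2] V n where
  toFun := cnotFun i j
  invFun := cnotFun i j
  left_inv := cnotFun_invol i j hij
  right_inv := cnotFun_invol i j hij
  map_add' x y := by
    funext k
    rw [Pi.add_apply, cnotFun_apply, cnotFun_apply, cnotFun_apply]
    by_cases hk : k = j
    · rw [if_pos hk, if_pos hk, if_pos hk, Pi.add_apply, Pi.add_apply]; ring
    · rw [if_neg hk, if_neg hk, if_neg hk]; rfl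
  map_smul' c x := by
    rcases zmod2_cases c with hc | hc <;> subst hc
    · funext k
      show cnotFun i j ((0 : ZMod 2) • x) k = ((0 : ZMod 2) • cnotFun i j x) k
      rw [zero_smul, zero_smul, Pi.zero_apply, cnotFun_apply]
      simp
    · funext k
      show cnotFun i j ((1 : ZMod 2) • x) k = ((1 : ZMod 2) • cnotFun i j x) k
      rw [one_smul, one_smul]

end cnot

lemma cnotTGroup_le_G : cnotTGroup n ≤ G n := by
  rw [cnotTGroup, Subgroup.closure_le]
  rintro W (⟨i, hW⟩ | ⟨i, j, hij, hW⟩)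
  · refine ⟨LinearEquiv.refl _ _, coordf i, coordf_mem i, fun x => ?_⟩
    rw [hW x]
    simp only [LinearEquiv.refl_apply, coordf, ωz_natCast]
  · refine ⟨cnotL i j hij, 0, zero_mem _, fun x => ?_⟩
    rw [hW x]
    simp [ωz_zero]
    rfl

lemma transvection_mulVec (i j : Fin n) (x : V n) :
    (Matrix.transvection i j (1 : ZMod 2)).mulVec x = cnotFun j i x := by
  funext k
  rw [Matrix.transvection, Matrix.add_mulVec, Matrix.one_mulVec, Pi.add_apply, cnotFun_apply]
  rw [Matrix.single_mulVec, one_mul]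
  have : Function.update (0 : Fin n → ZMod 2) i (x j) k = if k = i then x j else 0 := by
    rw [Function.update_apply]; rfl
  rw [this]
  by_cases hk : k = i
  · subst hk; rw [if_pos rfl, if_pos rfl, add_comm]
  · rw [if_neg hk, if_neg hk, add_zero]

lemma existsW_of_det_ne_zero (N : Matrix (Fin n) (Fin n) (ZMod 2)) (hN : N.det ≠ 0) :
    ∃ W ∈ cnotTGroup n, ∀ x, W.val (e x) = e (N.mulVec x) := by
  refine Matrix.diagonal_transvection_induction_of_det_ne_zero
    (fun N => ∃ W ∈ cnotTGroup n, ∀ x, W.val (e x) = e (N.mulVec x)) N hN ?_ ?_ ?_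
  · intro D hD
    have hD1 : D = fun _ => 1 := by
      funext i
      rcases zmod2_cases (D i) with h | h
      · exfalso
        apply hD
        rw [Matrix.det_diagonal]
        exact Finset.prod_eq_zero (Finset.mem_univ i) h
      · exact h
    refine ⟨1, one_mem _, fun x => ?_⟩
    rw [hD1, show Matrix.diagonal (fun _ => (1 : ZMod 2)) = 1 from Matrix.diagonal_one,
      Matrix.one_mulVec]
    rfl
  · rintro ⟨i, j, hij, c⟩
    rcases zmod2_cases c with hc | hc <;> subst hc
    · refine ⟨1, one_mem _, fun x => ?_⟩
      rw [Matrix.TransvectionStruct.toMatrix_mk, Matrix.transvection,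
        Matrix.single_zero, add_zero, Matrix.one_mulVec]
      rfl
    · refine ⟨Ugl (cnotL j i hij.symm).toEquiv 0, ?_, fun x => ?_⟩
      · apply Subgroup.subset_closure
        right
        refine ⟨j, i, hij.symm, fun x => ?_⟩
        rw [Ugl_apply_e, Pi.zero_apply, ωz_zero, one_smul]
        rfl
      · rw [Ugl_apply_e, Pi.zero_apply, ωz_zero, one_smul,
          Matrix.TransvectionStruct.toMatrix_mk, transvection_mulVec]
        rfl
  · rintro A B hA hB ⟨W1, h1, hW1⟩ ⟨W2, h2, hW2⟩
    refine ⟨W1 * W2, mul_mem h1 h2, fun x => ?_⟩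
    have : (W1 * W2).val (e x) = W1.val (W2.val (e x)) := rfl
    rw [this, hW2, hW1, Matrix.mulVec_mulVec]


lemma permPart (σ : V n ≃ₗ[ZMod 2] V n) : Ugl σ.toEquiv 0 ∈ cnotTGroup n := by
  set M := LinearMap.toMatrix' (σ : V n →ₗ[ZMod 2] V n) with hM
  have hMinv : M * LinearMap.toMatrix' (σ.symm : V n →ₗ[ZMod 2] V n) = 1 := by
    rw [hM, ← LinearMap.toMatrix'_comp,
      show (σ : V n →ₗ[ZMod 2] V n) ∘ₗ (σ.symm : V n →ₗ[ZMod 2] V n) = LinearMap.id from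
        by ext x; simp, LinearMap.toMatrix'_id]
  have hdet : M.det ≠ 0 := by
    intro h
    have := congrArg Matrix.det hMinv
    rw [Matrix.det_mul, h, zero_mul, Matrix.det_one] at this
    exact zero_ne_one this
  obtain ⟨W, hWm, hW⟩ := existsW_of_det_ne_zero M hdet
  have : W = Ugl σ.toEquiv 0 := by
    apply glext
    intro x
    rw [hW, Ugl_apply_e, Pi.zero_apply, ωz_zero, one_smul]
    have hMx : M.mulVec x = σ x := by
      rw [← Matrix.toLin'_apply, hM, Matrix.toLin'_toMatrix']
      rfl
    rw [hMx]
    rfl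
  rw [← this]
  exact hWm

lemma Ugl_refl_zero : Ugl (Equiv.refl (V n)) (0 : V n → ZMod 8) = 1 := by
  apply glext
  intro x
  rw [Ugl_apply_e, Pi.zero_apply, ωz_zero, one_smul]
  rfl

lemma Ugl_refl_add (f g : V n → ZMod 8) :
    Ugl (Equiv.refl (V n)) (f + g) =
      Ugl (Equiv.refl (V n)) f * Ugl (Equiv.refl (V n)) g := by
  apply glext
  intro x
  have : (Ugl (Equiv.refl (V n)) f * Ugl (Equiv.refl (V n)) g).val (e x)
      = (Ugl (Equiv.refl (V n)) f).val ((Ugl (Equiv.refl (V n)) g).val (e x)) := rfl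
  rw [this, Ugl_apply_e, Ugl_apply_e, map_smul, Ugl_apply_e, smul_smul, Pi.add_apply,
    ωz_add, mul_comm (ωz (f x))]
  rfl

section bmap

variable (v : V n) (i : Fin n)

def bFun : V n → V n := fun x => Function.update x i (∑ j, v j * x j)

lemma bFun_apply (x : V n) (k : Fin n) :
    bFun v i x k = if k = i then ∑ j, v j * x j else x k := by
  simp [bFun, Function.update_apply]

lemma bFun_sum (hvi : v i = 1) (x : V n) :
    (∑ j, v j * bFun v i x j) = x i := by
  rw [← Finset.add_sum_erase _ _ (Finset.mem_univ i)]
  rw [bFun_apply, if_pos rfl, hvi, one_mul]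
  have herase : ∀ j ∈ Finset.univ.erase i, v j * bFun v i x j = v j * x j := by
    intro j hj
    rw [bFun_apply, if_neg (Finset.mem_erase.mp hj).1]
  rw [Finset.sum_congr rfl herase]
  rw [← Finset.add_sum_erase _ (fun j => v j * x j) (Finset.mem_univ i), hvi, one_mul]
  rw [add_assoc, CharTwo.add_self_eq_zero, add_zero]

lemma bFun_invol (hvi : v i = 1) (x : V n) : bFun v i (bFun v i x) = x := by
  funext k
  by_cases hk : k = i
  · rw [bFun_apply, if_pos hk, hk]
    exact bFun_sum v i hvi x
  · rw [bFun_apply, if_neg hk, bFun_apply, if_neg hk]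

def bL (hvi : v i = 1) : V n ≃ₗ[ZMod 2] V n where
  toFun := bFun v i
  invFun := bFun v i
  left_inv := bFun_invol v i hvi
  right_inv := bFun_invol v i hvi
  map_add' x y := by
    funext k
    rw [Pi.add_apply, bFun_apply, bFun_apply, bFun_apply]
    by_cases hk : k = i
    · rw [if_pos hk, if_pos hk, if_pos hk]
      rw [← Finset.sum_add_distrib]
      exact Finset.sum_congr rfl fun j _ => by rw [Pi.add_apply]; ring
    · rw [if_neg hk, if_neg hk, if_neg hk]; rfl
  map_smul' c x := by
    rcases zmod2_cases c with hc | hc <;> subst hc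
    · funext k
      show bFun v i ((0 : ZMod 2) • x) k = ((0 : ZMod 2) • bFun v i x) k
      rw [zero_smul, zero_smul, Pi.zero_apply, bFun_apply]
      simp
    · funext k
      show bFun v i ((1 : ZMod 2) • x) k = ((1 : ZMod 2) • bFun v i x) k
      rw [one_smul, one_smul]

end bmap

lemma phasePart {f : V n → ZMod 8} (hf : f ∈ Pgrp n) :
    Ugl (Equiv.refl (V n)) f ∈ cnotTGroup n := by
  induction hf using AddSubgroup.closure_induction with
  | mem g hg =>
    obtain ⟨v, rfl⟩ := hg
    by_cases hv : v = 0
    · subst hv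
      have : dotf (0 : V n) = 0 := by
        funext x; unfold dotf; simp
      rw [this, Ugl_refl_zero]
      exact one_mem _
    · obtain ⟨i, hi⟩ := Function.ne_iff.mp hv
      have hvi : v i = 1 := (zmod2_cases (v i)).resolve_left hi
      have hUB := permPart (bL v i hvi)
      have hTi : Ugl (Equiv.refl (V n)) (coordf i) ∈ cnotTGroup n := by
        apply Subgroup.subset_closure
        left
        refine ⟨i, fun x => ?_⟩
        rw [Ugl_apply_e]
        simp only [Equiv.refl_apply, coordf, ωz_natCast]
      have key : Ugl (Equiv.refl (V n)) (dotf v) =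
          Ugl (bL v i hvi).toEquiv 0 * Ugl (Equiv.refl (V n)) (coordf i) *
            Ugl (bL v i hvi).toEquiv 0 := by
        apply glext
        intro x
        have hstep : (Ugl (bL v i hvi).toEquiv 0 * Ugl (Equiv.refl (V n)) (coordf i) *
            Ugl (bL v i hvi).toEquiv 0).val (e x) =
            (Ugl (bL v i hvi).toEquiv 0).val ((Ugl (Equiv.refl (V n)) (coordf i)).val
              ((Ugl (bL v i hvi).toEquiv 0).val (e x))) := rfl
        rw [hstep, Ugl_apply_e, Ugl_apply_e, Pi.zero_apply, ωz_zero, one_smul,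
          Ugl_apply_e, map_smul, Ugl_apply_e, Pi.zero_apply, ωz_zero, one_smul]
        simp only [Equiv.refl_apply]
        have h2 : coordf i ((bL v i hvi).toEquiv x) = dotf v x := by
          show coordf i (bFun v i x) = dotf v x
          unfold coordf dotf
          rw [bFun_apply, if_pos rfl]
        rw [h2, show (bL v i hvi).toEquiv ((bL v i hvi).toEquiv x) = x from
          bFun_invol v i hvi x]
      rw [key]
      exact mul_mem (mul_mem hUB hTi) hUB
  | zero => rw [Ugl_refl_zero]; exact one_mem _
  | add f g _ _ hf hg => rw [Ugl_refl_add]; exact mul_mem hf hg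
  | neg f _ hf =>
    have hinv : Ugl (Equiv.refl (V n)) (-f) = (Ugl (Equiv.refl (V n)) f)⁻¹ := by
      apply eq_inv_of_mul_eq_one_left
      rw [← Ugl_refl_add, neg_add_cancel, Ugl_refl_zero]
    rw [hinv]
    exact inv_mem hf

theorem groupEq : cnotTGroup n = G n := by
  apply le_antisymm cnotTGroup_le_G
  rintro W ⟨σ, f, hf, hW⟩
  have : W = Ugl σ.toEquiv 0 * Ugl (Equiv.refl (V n)) f := by
    apply glext
    intro x
    have hstep : (Ugl σ.toEquiv 0 * Ugl (Equiv.refl (V n)) f).val (e x) =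
        (Ugl σ.toEquiv 0).val ((Ugl (Equiv.refl (V n)) f).val (e x)) := rfl
    rw [hW, hstep, Ugl_apply_e, map_smul, Ugl_apply_e, Pi.zero_apply, ωz_zero, one_smul]
    rfl
  rw [this]
  exact mul_mem (permPart σ) (phasePart hf)


lemma Ugl_inj {σ τ : V n ≃ V n} {f g : V n → ZMod 8} (h : Ugl σ f = Ugl τ g) :
    σ = τ ∧ f = g := by
  have key : ∀ x, σ x = τ x ∧ f x = g x := by
    intro x
    have hval : ωz (f x) • e (σ x) = ωz (g x) • e (τ x) := by
      rw [← Ugl_apply_e, ← Ugl_apply_e, h]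
    have h1 := congrFun hval (σ x)
    simp only [Pi.smul_apply, smul_eq_mul, e, Pi.single_eq_same, mul_one] at h1
    by_cases hc : σ x = τ x
    · refine ⟨hc, ωz_inj ?_⟩
      rw [h1, hc, Pi.single_eq_same, mul_one]
    · exfalso
      rw [Pi.single_eq_of_ne hc, mul_zero] at h1
      exact ωz_ne_zero _ h1
  exact ⟨Equiv.ext fun x => (key x).1, funext fun x => (key x).2⟩

def toG (p : (V n ≃ₗ[ZMod 2] V n) × (Pgrp n)) : G n :=
  ⟨Ugl p.1.toEquiv p.2.val, p.1, p.2.val, p.2.2, fun x => Ugl_apply_e _ _ x⟩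

lemma toG_bijective : Function.Bijective (toG (n := n)) := by
  constructor
  · intro p q h
    have h' : Ugl p.1.toEquiv p.2.val = Ugl q.1.toEquiv q.2.val := congrArg Subtype.val h
    obtain ⟨h1, h2⟩ := Ugl_inj h'
    refine Prod.ext ?_ (Subtype.ext h2)
    apply LinearEquiv.toEquiv_injective h1
  · rintro ⟨W, σ, f, hf, hW⟩
    refine ⟨(σ, ⟨f, hf⟩), Subtype.ext ?_⟩
    apply glext
    intro x
    show (Ugl σ.toEquiv f).val (e x) = W.val (e x)
    rw [Ugl_apply_e, hW]
    rfl

instance : Finite (V n ≃ₗ[ZMod 2] V n) :=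
  Finite.of_injective (fun σ => (σ : V n → V n)) (fun σ τ h => by
    apply LinearEquiv.toLinearMap_injective
    apply LinearMap.ext
    exact fun x => congrFun h x)

instance : Finite (Pgrp n) := Subtype.finite

instance finiteG : Finite (G n) := Finite.of_surjective _ toG_bijective.2

lemma cardG : Nat.card (G n) =
    Nat.card (V n ≃ₗ[ZMod 2] V n) * Nat.card (Pgrp n) := by
  rw [← Nat.card_prod]
  exact (Nat.card_congr (Equiv.ofBijective _ toG_bijective)).symm

/-! ### The phase polynomial parametrization -/

abbrev SubK (n k : ℕ) := {s : Finset (Fin n) // s ∈ Finset.powersetCard k (Finset.univ : Finset (Fin n))}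

def mono (s : Finset (Fin n)) : V n → ZMod 8 := fun x => ∏ j ∈ s, (((x j).val : ℕ) : ZMod 8)

def h2 : ZMod 4 →+ ZMod 8 :=
  AddMonoidHom.mk' (fun b => 2 * ((b.val : ℕ) : ZMod 8)) (by decide)

def h4 : ZMod 2 →+ ZMod 8 :=
  AddMonoidHom.mk' (fun c => 4 * ((c.val : ℕ) : ZMod 8)) (by decide)

abbrev PhaseDom (n : ℕ) := (SubK n 1 → ZMod 8) × (SubK n 2 → ZMod 4) × (SubK n 3 → ZMod 2)

def φf (u : PhaseDom n) : V n → ZMod 8 := fun x =>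
  (∑ s : SubK n 1, u.1 s * mono s.val x) + (∑ s : SubK n 2, h2 (u.2.1 s) * mono s.val x)
  + (∑ s : SubK n 3, h4 (u.2.2 s) * mono s.val x)

lemma φf_add (u u' : PhaseDom n) : φf (u + u') = φf u + φf u' := by
  funext x
  simp only [φf, Pi.add_apply, Prod.fst_add, Prod.snd_add, map_add, add_mul,
    Finset.sum_add_distrib]
  ring

def φ : PhaseDom n →+ (V n → ZMod 8) := AddMonoidHom.mk' φf φf_add

def indV (T : Finset (Fin n)) : V n := fun j => if j ∈ T then 1 else 0

lemma mono_ind (s T : Finset (Fin n)) : mono s (indV T) = if s ⊆ T then 1 else 0 := by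
  by_cases h : s ⊆ T
  · rw [if_pos h]
    apply Finset.prod_eq_one
    intro j hj
    rw [show indV T j = 1 from if_pos (h hj)]
    rfl
  · rw [if_neg h]
    obtain ⟨j, hjs, hjT⟩ := Finset.not_subset.mp h
    apply Finset.prod_eq_zero hjs
    rw [show indV T j = 0 from if_neg hjT]
    rfl

lemma card_subK {k : ℕ} (s : SubK n k) : s.val.card = k :=
  Finset.mem_powersetCard_univ.mp s.2

lemma sum_subK_ind (k : ℕ) (F : SubK n k → ZMod 8) (T : Finset (Fin n)) :
    (∑ s : SubK n k, F s * mono s.val (indV T))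
      = ∑ s : SubK n k, if s.val ⊆ T then F s else 0 := by
  refine Finset.sum_congr rfl fun s _ => ?_
  rw [mono_ind]
  split_ifs <;> simp

lemma sum_subK_ind_small {k : ℕ} (F : SubK n k → ZMod 8) (T : Finset (Fin n))
    (hT : T.card < k) : (∑ s : SubK n k, F s * mono s.val (indV T)) = 0 := by
  rw [sum_subK_ind]
  apply Finset.sum_eq_zero
  intro s _
  rw [if_neg]
  intro hsub
  have := Finset.card_le_card hsub
  rw [card_subK s] at this
  omega

lemma sum_subK_ind_self {k : ℕ} (F : SubK n k → ZMod 8) (s₀ : SubK n k) :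
    (∑ s : SubK n k, F s * mono s.val (indV s₀.val)) = F s₀ := by
  rw [sum_subK_ind]
  rw [Finset.sum_eq_single s₀]
  · rw [if_pos (subset_refl _)]
  · intro s _ hs
    rw [if_neg]
    intro hsub
    apply hs
    apply Subtype.ext
    exact Finset.eq_of_subset_of_card_le hsub (by rw [card_subK, card_subK])
  · intro h
    exact absurd (Finset.mem_univ s₀) h

lemma h2_inj : Function.Injective h2 := by decide
lemma h4_inj : Function.Injective h4 := by decide

lemma φ_inj : Function.Injective (φ (n := n)) := by
  intro u u' h
  have hx : ∀ x, φf u x = φf u' x := fun x => congrFun h x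
  have ha : u.1 = u'.1 := by
    funext s
    have h1 := hx (indV s.val)
    unfold φf at h1
    rw [sum_subK_ind_self u.1 s, sum_subK_ind_self u'.1 s,
      sum_subK_ind_small (fun t => h2 (u.2.1 t)) _ (by rw [card_subK s]; omega),
      sum_subK_ind_small (fun t => h2 (u'.2.1 t)) _ (by rw [card_subK s]; omega),
      sum_subK_ind_small (fun t => h4 (u.2.2 t)) _ (by rw [card_subK s]; omega),
      sum_subK_ind_small (fun t => h4 (u'.2.2 t)) _ (by rw [card_subK s]; omega)] at h1
    simpa using h1
  have hb : u.2.1 = u'.2.1 := by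
    funext s
    have h1 := hx (indV s.val)
    unfold φf at h1
    rw [sum_subK_ind_self (fun t => h2 (u.2.1 t)) s,
      sum_subK_ind_self (fun t => h2 (u'.2.1 t)) s,
      sum_subK_ind_small (fun t => h4 (u.2.2 t)) _ (by rw [card_subK s]; omega),
      sum_subK_ind_small (fun t => h4 (u'.2.2 t)) _ (by rw [card_subK s]; omega), ha] at h1
    apply h2_inj
    exact add_left_cancel (add_right_cancel h1)
  have hc : u.2.2 = u'.2.2 := by
    funext s
    have h1 := hx (indV s.val)
    unfold φf at h1
    rw [sum_subK_ind_self (fun t => h4 (u.2.2 t)) s,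
      sum_subK_ind_self (fun t => h4 (u'.2.2 t)) s, ha, hb] at h1
    apply h4_inj
    exact add_left_cancel h1
  exact Prod.ext ha (Prod.ext hb hc)


def sumf (T : Finset (Fin n)) : V n → ZMod 8 :=
  fun x => (((∑ j ∈ T, x j).val : ℕ) : ZMod 8)

lemma sumf_eq_dotf (T : Finset (Fin n)) : sumf T = dotf (indV T) := by
  funext x
  unfold sumf dotf
  congr 2
  rw [show ∑ j, indV T j * x j = ∑ j, if j ∈ T then x j else 0 from
    Finset.sum_congr rfl fun j _ => by rw [indV]; split_ifs <;> simp]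
  rw [Finset.sum_ite_mem, Finset.univ_inter]

lemma sumf_mem (T : Finset (Fin n)) : sumf T ∈ Pgrp n := by
  rw [sumf_eq_dotf]
  exact AddSubgroup.subset_closure ⟨_, rfl⟩

lemma natCast_val_smul (m : ℕ) (z : ZMod 8) : m • z = ((m : ℕ) : ZMod 8) * z := by
  rw [nsmul_eq_mul]

lemma pair_identity (a b : ZMod 2) :
    (2 : ZMod 8) * (((a.val : ℕ) : ZMod 8) * ((b.val : ℕ) : ZMod 8))
      = ((a.val : ℕ) : ZMod 8) + ((b.val : ℕ) : ZMod 8) - (((a + b).val : ℕ) : ZMod 8) := by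
  revert a b; decide

lemma triple_identity (a b c : ZMod 2) :
    (4 : ZMod 8) * (((a.val : ℕ) : ZMod 8) * (((b.val : ℕ) : ZMod 8) * ((c.val : ℕ) : ZMod 8)))
      = (((a + b + c).val : ℕ) : ZMod 8)
        + (((a.val : ℕ) : ZMod 8) + ((b.val : ℕ) : ZMod 8) + ((c.val : ℕ) : ZMod 8))
        - ((((a + b).val : ℕ) : ZMod 8) + (((b + c).val : ℕ) : ZMod 8)
            + (((a + c).val : ℕ) : ZMod 8)) := by
  revert a b c; decide

lemma mono1_mem (i : Fin n) (av : ZMod 8) : (fun x => av * mono {i} x) ∈ Pgrp n := by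
  have hrw : (fun x => av * mono {i} x) = av.val • coordf i := by
    funext x
    rw [Pi.smul_apply, natCast_val_smul, ZMod.natCast_val, ZMod.cast_id]
    congr 1
    rw [mono, Finset.prod_singleton]
    rfl
  rw [hrw]
  exact AddSubgroup.nsmul_mem _ (coordf_mem i) _

lemma two_mono2_mem (i j : Fin n) (hij : i ≠ j) :
    (fun x => (2 : ZMod 8) * mono {i, j} x) ∈ Pgrp n := by
  have hrw : (fun x => (2 : ZMod 8) * mono {i, j} x)
      = coordf i + coordf j - sumf {i, j} := by
    funext x
    rw [Pi.sub_apply, Pi.add_apply, mono, Finset.prod_pair hij]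
    rw [show sumf {i, j} x = (((x i + x j).val : ℕ) : ZMod 8) from by
      rw [sumf, Finset.sum_pair hij]]
    exact pair_identity (x i) (x j)
  rw [hrw]
  exact sub_mem (add_mem (coordf_mem i) (coordf_mem j)) (sumf_mem _)

lemma mono2_mem (i j : Fin n) (hij : i ≠ j) (bv : ZMod 4) :
    (fun x => h2 bv * mono {i, j} x) ∈ Pgrp n := by
  have hrw : (fun x => h2 bv * mono {i, j} x)
      = bv.val • (fun x => (2 : ZMod 8) * mono {i, j} x) := by
    funext x
    rw [Pi.smul_apply, natCast_val_smul]
    show 2 * ((bv.val : ℕ) : ZMod 8) * mono {i, j} x = _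
    ring
  rw [hrw]
  exact AddSubgroup.nsmul_mem _ (two_mono2_mem i j hij) _

lemma four_mono3_mem (i j k : Fin n) (hij : i ≠ j) (hik : i ≠ k) (hjk : j ≠ k) :
    (fun x => (4 : ZMod 8) * mono {i, j, k} x) ∈ Pgrp n := by
  have hrw : (fun x => (4 : ZMod 8) * mono {i, j, k} x)
      = sumf {i, j, k} + (coordf i + coordf j + coordf k)
        - (sumf {i, j} + sumf {j, k} + sumf {i, k}) := by
    funext x
    have hm : mono {i, j, k} x
        = ((x i).val : ZMod 8) * (((x j).val : ZMod 8) * ((x k).val : ZMod 8)) := by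
      rw [mono, Finset.prod_insert (by simp [hij, hik]), Finset.prod_pair hjk]
    have hs3 : sumf {i, j, k} x = (((x i + x j + x k).val : ℕ) : ZMod 8) := by
      rw [sumf, Finset.sum_insert (by simp [hij, hik]), Finset.sum_pair hjk, add_assoc]
    have hsij : sumf {i, j} x = (((x i + x j).val : ℕ) : ZMod 8) := by
      rw [sumf, Finset.sum_pair hij]
    have hsjk : sumf {j, k} x = (((x j + x k).val : ℕ) : ZMod 8) := by
      rw [sumf, Finset.sum_pair hjk]
    have hsik : sumf {i, k} x = (((x i + x k).val : ℕ) : ZMod 8) := by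
      rw [sumf, Finset.sum_pair hik]
    simp only [Pi.sub_apply, Pi.add_apply, hm, hs3, hsij, hsjk, hsik]
    exact triple_identity (x i) (x j) (x k)
  rw [hrw]
  exact sub_mem (add_mem (sumf_mem _) (add_mem (add_mem (coordf_mem i) (coordf_mem j))
    (coordf_mem k))) (add_mem (add_mem (sumf_mem _) (sumf_mem _)) (sumf_mem _))

lemma mono3_mem (i j k : Fin n) (hij : i ≠ j) (hik : i ≠ k) (hjk : j ≠ k) (cv : ZMod 2) :
    (fun x => h4 cv * mono {i, j, k} x) ∈ Pgrp n := by
  have hrw : (fun x => h4 cv * mono {i, j, k} x)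
      = cv.val • (fun x => (4 : ZMod 8) * mono {i, j, k} x) := by
    funext x
    rw [Pi.smul_apply, natCast_val_smul]
    show 4 * ((cv.val : ℕ) : ZMod 8) * mono {i, j, k} x = _
    ring
  rw [hrw]
  exact AddSubgroup.nsmul_mem _ (four_mono3_mem i j k hij hik hjk) _

lemma φ_mem_Pgrp (u : PhaseDom n) : φ u ∈ Pgrp n := by
  show φf u ∈ Pgrp n
  have h1 : (fun x => ∑ s : SubK n 1, u.1 s * mono s.val x) ∈ Pgrp n := by
    rw [show (fun x => ∑ s : SubK n 1, u.1 s * mono s.val x)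
        = ∑ s : SubK n 1, (fun x => u.1 s * mono s.val x) from by
      funext x; rw [Finset.sum_apply]]
    apply AddSubgroup.sum_mem
    intro s _
    obtain ⟨i, hi⟩ := Finset.card_eq_one.mp (card_subK s)
    rw [hi]
    exact mono1_mem i _
  have hb : (fun x => ∑ s : SubK n 2, h2 (u.2.1 s) * mono s.val x) ∈ Pgrp n := by
    rw [show (fun x => ∑ s : SubK n 2, h2 (u.2.1 s) * mono s.val x)
        = ∑ s : SubK n 2, (fun x => h2 (u.2.1 s) * mono s.val x) from by
      funext x; rw [Finset.sum_apply]]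
    apply AddSubgroup.sum_mem
    intro s _
    obtain ⟨i, j, hij, hs⟩ := Finset.card_eq_two.mp (card_subK s)
    rw [hs]
    exact mono2_mem i j hij _
  have hcc : (fun x => ∑ s : SubK n 3, h4 (u.2.2 s) * mono s.val x) ∈ Pgrp n := by
    rw [show (fun x => ∑ s : SubK n 3, h4 (u.2.2 s) * mono s.val x)
        = ∑ s : SubK n 3, (fun x => h4 (u.2.2 s) * mono s.val x) from by
      funext x; rw [Finset.sum_apply]]
    apply AddSubgroup.sum_mem
    intro s _
    obtain ⟨i, j, k, hij, hik, hjk, hs⟩ := Finset.card_eq_three.mp (card_subK s)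
    rw [hs]
    exact mono3_mem i j k hij hik hjk _
  exact add_mem (add_mem h1 hb) hcc


lemma bit2 (a b : ZMod 2) :
    (((a + b).val : ℕ) : ZMod 8)
      = ((a.val : ℕ) : ZMod 8) + ((b.val : ℕ) : ZMod 8)
        - 2 * (((a.val : ℕ) : ZMod 8) * ((b.val : ℕ) : ZMod 8)) := by
  revert a b; decide

lemma mono_empty (x : V n) : mono ∅ x = 1 := by rw [mono, Finset.prod_empty]

lemma IE (S : Finset (Fin n)) (x : V n) :
    ∑ T ∈ S.powerset, (-2 : ZMod 8) ^ (T.card - 1) * mono T x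
      = 1 + (((∑ j ∈ S, x j).val : ℕ) : ZMod 8) := by
  induction S using Finset.induction_on with
  | empty =>
    rw [Finset.powerset_empty, Finset.sum_singleton, Finset.sum_empty, mono_empty]
    norm_num
  | @insert a S ha ih =>
    rw [Finset.sum_powerset_insert ha]
    have hsec : ∀ T ∈ S.powerset,
        (-2 : ZMod 8) ^ ((insert a T).card - 1) * mono (insert a T) x
          = (((x a).val : ℕ) : ZMod 8) * ((-2 : ZMod 8) ^ T.card * mono T x) := by
      intro T hT
      have haT : a ∉ T := fun h => ha (Finset.mem_powerset.mp hT h)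
      rw [Finset.card_insert_of_notMem haT, Nat.add_sub_cancel]
      conv_lhs => rw [mono]
      rw [Finset.prod_insert haT,
        show (∏ j ∈ T, (((x j).val : ℕ) : ZMod 8)) = mono T x from rfl]
      ring
    rw [Finset.sum_congr rfl hsec, ← Finset.mul_sum]
    have hkey : ∑ T ∈ S.powerset, (-2 : ZMod 8) ^ T.card * mono T x
        = (-2) * (∑ T ∈ S.powerset, (-2 : ZMod 8) ^ (T.card - 1) * mono T x) + 3 := by
      rw [Finset.mul_sum,
        show (3 : ZMod 8) = ∑ T ∈ S.powerset, if T = ∅ then 3 else 0 from by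
          rw [Finset.sum_ite_eq' S.powerset ∅ (fun _ => (3 : ZMod 8)),
            if_pos (Finset.empty_mem_powerset S)],
        ← Finset.sum_add_distrib]
      refine Finset.sum_congr rfl fun T hT => ?_
      by_cases hTe : T = ∅
      · subst hTe
        rw [if_pos rfl, mono_empty, Finset.card_empty]
        norm_num
      · rw [if_neg hTe, add_zero, ← mul_assoc, ← pow_succ']
        have hc : T.card - 1 + 1 = T.card := by
          have := Finset.card_pos.mpr (Finset.nonempty_of_ne_empty hTe)
          omega
        rw [hc]
    rw [hkey, ih, Finset.sum_insert ha, bit2 (x a) (∑ j ∈ S, x j)]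
    ring


lemma sum_subK_gen (k : ℕ) (F : Finset (Fin n) → ZMod 8) :
    (∑ s : SubK n k, F s.val) = ∑ T ∈ Finset.powersetCard k Finset.univ, F T :=
  (Finset.sum_subtype _ (fun T => Iff.rfl) F).symm

lemma filter_powersetCard (k : ℕ) (S : Finset (Fin n)) :
    (Finset.powersetCard k (Finset.univ : Finset (Fin n))).filter (· ⊆ S)
      = Finset.powersetCard k S := by
  ext T
  simp only [Finset.mem_filter, Finset.mem_powersetCard, Finset.subset_univ, true_and]
  tauto

lemma indic_sum (k : ℕ) (S : Finset (Fin n)) (c : ZMod 8) (x : V n) :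
    (∑ T ∈ Finset.powersetCard k (Finset.univ : Finset (Fin n)),
        (if T ⊆ S then c else 0) * mono T x)
      = ∑ T ∈ Finset.powersetCard k S, c * mono T x := by
  rw [← filter_powersetCard k S, Finset.sum_filter]
  exact Finset.sum_congr rfl fun T _ => by split_ifs <;> simp

def coefu (S : Finset (Fin n)) : PhaseDom n :=
  (fun s => if s.val ⊆ S then 1 else 0,
   fun s => if s.val ⊆ S then (-1 : ZMod 4) else 0,
   fun s => if s.val ⊆ S then 1 else 0)

lemma pow_neg_two_big {j : ℕ} (hj : 4 ≤ j) : (-2 : ZMod 8) ^ (j - 1) = 0 := by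
  have h3 : (-2 : ZMod 8) ^ 3 = 0 := by decide
  rw [show j - 1 = 3 + (j - 4) from by omega, pow_add, h3, zero_mul]

lemma φ_coefu (S : Finset (Fin n)) : φ (coefu S) = sumf S := by
  funext x
  show φf (coefu S) x = sumf S x
  unfold φf coefu
  simp only
  rw [show (∑ s : SubK n 2, h2 (if s.val ⊆ S then (-1 : ZMod 4) else 0) * mono s.val x)
      = ∑ s : SubK n 2, (if s.val ⊆ S then (-2 : ZMod 8) else 0) * mono s.val x from
    Finset.sum_congr rfl fun s _ => by
      rw [apply_ite h2, map_zero, show h2 (-1 : ZMod 4) = (-2 : ZMod 8) from by decide]]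
  rw [show (∑ s : SubK n 3, h4 (if s.val ⊆ S then (1 : ZMod 2) else 0) * mono s.val x)
      = ∑ s : SubK n 3, (if s.val ⊆ S then (4 : ZMod 8) else 0) * mono s.val x from
    Finset.sum_congr rfl fun s _ => by
      rw [apply_ite h4, map_zero, show h4 (1 : ZMod 2) = (4 : ZMod 8) from by decide]]
  rw [sum_subK_gen 1 (fun T => (if T ⊆ S then (1 : ZMod 8) else 0) * mono T x),
    sum_subK_gen 2 (fun T => (if T ⊆ S then (-2 : ZMod 8) else 0) * mono T x),
    sum_subK_gen 3 (fun T => (if T ⊆ S then (4 : ZMod 8) else 0) * mono T x),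
    indic_sum, indic_sum, indic_sum]
  -- now RHS : sumf S x; use IE
  have hIE := IE S x
  rw [Finset.sum_powerset] at hIE
  set A : ℕ → ZMod 8 := fun j => ∑ T ∈ Finset.powersetCard j S,
    (-2 : ZMod 8) ^ (T.card - 1) * mono T x with hA
  have hA0 : A 0 = 1 := by
    rw [hA]
    simp only [Finset.powersetCard_zero, Finset.sum_singleton, Finset.card_empty, mono_empty]
    norm_num
  have hAbig : ∀ j, 4 ≤ j → A j = 0 := by
    intro j hj
    rw [hA]
    apply Finset.sum_eq_zero
    intro T hT
    rw [(Finset.mem_powersetCard.mp hT).2, pow_neg_two_big hj, zero_mul]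
  have hAempty : ∀ j, S.card < j → A j = 0 := by
    intro j hj
    rw [hA]
    simp only
    rw [Finset.powersetCard_eq_empty.mpr hj, Finset.sum_empty]
  have hsum : ∑ j ∈ Finset.range (S.card + 1), A j = A 0 + A 1 + A 2 + A 3 := by
    have hstep1 : ∑ j ∈ Finset.range (S.card + 1), A j
        = ∑ j ∈ Finset.range (S.card + 4), A j := by
      apply Finset.sum_subset (Finset.range_subset_range.mpr (by omega))
      intro j hj hnj
      exact hAempty j (by simp only [Finset.mem_range] at hj hnj; omega)
    have hstep2 : ∑ j ∈ Finset.range (S.card + 4), A j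
        = ∑ j ∈ Finset.range 4, A j := by
      symm
      apply Finset.sum_subset (Finset.range_subset_range.mpr (by omega))
      intro j hj hnj
      exact hAbig j (by simp only [Finset.mem_range] at hnj; omega)
    rw [hstep1, hstep2, Finset.sum_range_succ, Finset.sum_range_succ, Finset.sum_range_succ,
      Finset.sum_range_one]
  rw [hsum, hA0] at hIE
  -- identify A 1, A 2, A 3 with the constant-coefficient sums
  have hA1 : A 1 = ∑ T ∈ Finset.powersetCard 1 S, (1 : ZMod 8) * mono T x := by
    rw [hA]
    exact Finset.sum_congr rfl fun T hT => by
      rw [(Finset.mem_powersetCard.mp hT).2]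
      norm_num
  have hA2 : A 2 = ∑ T ∈ Finset.powersetCard 2 S, (-2 : ZMod 8) * mono T x := by
    rw [hA]
    exact Finset.sum_congr rfl fun T hT => by
      rw [(Finset.mem_powersetCard.mp hT).2]
      norm_num
  have hA3 : A 3 = ∑ T ∈ Finset.powersetCard 3 S, (4 : ZMod 8) * mono T x := by
    rw [hA]
    exact Finset.sum_congr rfl fun T hT => by
      rw [(Finset.mem_powersetCard.mp hT).2]
      norm_num
  rw [hA1, hA2, hA3] at hIE
  have : sumf S x = (((∑ j ∈ S, x j).val : ℕ) : ZMod 8) := rfl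
  rw [this]
  linear_combination hIE

lemma dotf_eq_sumf (v : V n) :
    dotf v = sumf (Finset.univ.filter (fun j => v j = 1)) := by
  funext x
  unfold dotf sumf
  congr 2
  rw [Finset.sum_filter]
  refine Finset.sum_congr rfl fun j _ => ?_
  rcases zmod2_cases (v j) with h | h <;> rw [h] <;> simp

lemma Pgrp_eq_range : Pgrp n = φ.range := by
  apply le_antisymm
  · rw [Pgrp, AddSubgroup.closure_le]
    rintro f ⟨v, rfl⟩
    exact ⟨coefu (Finset.univ.filter (fun j => v j = 1)),
      (φ_coefu _).trans (dotf_eq_sumf v).symm⟩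
  · rintro f ⟨u, rfl⟩
    exact φ_mem_Pgrp u


lemma card_Pgrp : Nat.card (Pgrp n)
    = 8 ^ (n.choose 1) * (4 ^ (n.choose 2) * 2 ^ (n.choose 3)) := by
  have h1 : Nat.card (Pgrp n) = Nat.card ((φ (n := n)).range) := by
    rw [Pgrp_eq_range]
  have h2 : Nat.card ((φ (n := n)).range) = Nat.card (PhaseDom n) :=
    (Nat.card_congr (AddMonoidHom.ofInjective φ_inj).toEquiv).symm
  have hcardK : ∀ k : ℕ, Nat.card (SubK n k) = n.choose k := by
    intro k
    rw [Nat.card_eq_fintype_card, Fintype.card_coe, Finset.card_powersetCard,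
      Finset.card_univ, Fintype.card_fin]
  rw [h1, h2]
  rw [Nat.card_prod, Nat.card_prod, Nat.card_fun, Nat.card_fun, Nat.card_fun,
    Nat.card_zmod, Nat.card_zmod, Nat.card_zmod, hcardK, hcardK, hcardK]

lemma card_auts : Nat.card (V n ≃ₗ[ZMod 2] V n)
    = ∏ i : Fin n, (2 ^ n - 2 ^ (i : ℕ)) := by
  have e1 : GL (Fin n) (ZMod 2) ≃ (V n ≃ₗ[ZMod 2] V n) :=
    ((Matrix.GeneralLinearGroup.toLin (n := Fin n) (R := ZMod 2)).trans
      (LinearMap.GeneralLinearGroup.generalLinearEquiv (ZMod 2) (V n))).toEquiv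
  rw [← Nat.card_congr e1, Matrix.card_GL_field]
  simp [ZMod.card]

theorem main_card : Nat.card (cnotTGroup n)
    = 2 ^ (3 * n + 2 * n.choose 2 + n.choose 3)
        * ∏ i ∈ Finset.Icc 1 n, (2 ^ n - 2 ^ (i - 1)) := by
  have h0 : Nat.card (cnotTGroup n) = Nat.card (G n) := by rw [groupEq]
  rw [h0, cardG, card_Pgrp, card_auts]
  have hprod : (∏ i : Fin n, (2 ^ n - 2 ^ (i : ℕ)))
      = ∏ i ∈ Finset.Icc 1 n, (2 ^ n - 2 ^ (i - 1)) := by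
    rw [Fin.prod_univ_eq_prod_range (fun i => 2 ^ n - 2 ^ i) n]
    rw [← Finset.Ico_add_one_right_eq_Icc, Finset.prod_Ico_eq_prod_range]
    simp
  rw [hprod, Nat.choose_one_right]
  rw [show (8 : ℕ) = 2 ^ 3 from rfl, show (4 : ℕ) = 2 ^ 2 from rfl,
    ← pow_mul, ← pow_mul, pow_add, pow_add]
  ring

theorem main_finite : Finite (cnotTGroup n) := by
  rw [groupEq]
  exact finiteG

end Stmt12

theorem stmt12 {n : ℕ} (hn : 1 ≤ n) :
    Finite (cnotTGroup n) ∧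
    Nat.card (cnotTGroup n) =
      2 ^ (3 * n + 2 * n.choose 2 + n.choose 3) *
        ∏ i ∈ Finset.Icc 1 n, (2 ^ n - 2 ^ (i - 1)) := by
  exact ⟨Stmt12.main_finite, Stmt12.main_card⟩
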